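/- arXiv:2308.06059 — 2 statements merged into one kernel-verified Lean document; each statement's English description precedes it below -/
import Mathlib

section
/- Let n ≥ 1 be an integer and let ω > 0 be a real number with ω ∉ {1,2,…,n}. Then for every z ∈ ℂ with z ≠ 0, S_n^{−ω}(z) = (−1)^n · ((ω)_n/(1−ω)_n) · z^n · S_n^{ω−1}(1/z). -/
open Finset Polynomial

lemma asc_eval_prod (k : ℕ) (x : ℂ) :
    (ascPochhammer ℂ k).eval x = ∏ i ∈ Finset.range k, (x + i) := by
  induction k with
  | zero => simp
  | succ m ih =>
      rw [ascPochhammer_succ_right, Finset.prod_range_succ, ← ih]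
      simp [Polynomial.eval_mul]

lemma prodL (m : ℕ) : ∀ x : ℂ,
    (∏ i ∈ Finset.range m, (x - m + i)) = (-1) ^ m * ∏ i ∈ Finset.range m, (1 - x + i) := by
  induction m with
  | zero => simp
  | succ m ih =>
      intro x
      rw [Finset.prod_range_succ, Finset.prod_range_succ']
      have h := ih (x - 1)
      push_cast
      have e1 : (∏ i ∈ Finset.range m, (x - (m + 1) + i)) =
          ∏ i ∈ Finset.range m, ((x - 1) - m + i) := by
        apply Finset.prod_congr rfl; intro i _; push_cast; ring
      have e2 : (∏ i ∈ Finset.range m, (1 - (x-1) + i)) =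
          ∏ i ∈ Finset.range m, (1 - x + (i + 1)) := by
        apply Finset.prod_congr rfl; intro i _; ring
      rw [e1, h, e2]
      ring

lemma key (w : ℂ) (ℓ m : ℕ) :
    (∏ i ∈ Finset.range ℓ, (w + i)) * (∏ i ∈ Finset.range (ℓ + m), (1 - w + i)) *
        (∏ i ∈ Finset.range m, (1 - w - (ℓ + m : ℕ) + i)) =
      (-1) ^ (ℓ + m) * (∏ i ∈ Finset.range (ℓ + m), (w + i)) *
        (∏ i ∈ Finset.range m, (1 - w + i)) * (∏ i ∈ Finset.range ℓ, (w - (ℓ + m : ℕ) + i)) := by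
  have s1 : (∏ i ∈ Finset.range (ℓ + m), (1 - w + i)) =
      (∏ i ∈ Finset.range m, (1 - w + i)) * ∏ i ∈ Finset.range ℓ, (1 - w + m + i) := by
    rw [add_comm ℓ m, Finset.prod_range_add]
    congr 1; apply Finset.prod_congr rfl; intro i _; push_cast; ring
  have s2 : (∏ i ∈ Finset.range (ℓ + m), (w + i)) =
      (∏ i ∈ Finset.range ℓ, (w + i)) * ∏ i ∈ Finset.range m, (w + ℓ + i) := by
    rw [Finset.prod_range_add]
    congr 1; apply Finset.prod_congr rfl; intro i _; push_cast; ring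
  have s3 : (∏ i ∈ Finset.range m, (1 - w - (ℓ + m : ℕ) + i)) =
      (-1) ^ m * ∏ i ∈ Finset.range m, (w + ℓ + i) := by
    have h := prodL m (1 - w - ℓ)
    have e1 : (∏ i ∈ Finset.range m, (1 - w - (ℓ + m : ℕ) + i)) =
        ∏ i ∈ Finset.range m, ((1 - w - ℓ) - m + i) := by
      apply Finset.prod_congr rfl; intro i _; push_cast; ring
    rw [e1, h]
    congr 1; apply Finset.prod_congr rfl; intro i _; push_cast; ring
  have s4 : (∏ i ∈ Finset.range ℓ, (w - (ℓ + m : ℕ) + i)) =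
      (-1) ^ ℓ * ∏ i ∈ Finset.range ℓ, (1 - w + m + i) := by
    have h := prodL ℓ (w - m)
    have e1 : (∏ i ∈ Finset.range ℓ, (w - (ℓ + m : ℕ) + i)) =
        ∏ i ∈ Finset.range ℓ, ((w - m) - ℓ + i) := by
      apply Finset.prod_congr rfl; intro i _; push_cast; ring
    rw [e1, h]
    congr 1; apply Finset.prod_congr rfl; intro i _; push_cast; ring
  have hsq : ((-1:ℂ))^ℓ * ((-1:ℂ))^ℓ = 1 := by
    rw [← pow_add]; exact Even.neg_one_pow ⟨ℓ, rfl⟩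
  rw [s1, s2, s3, s4, pow_add]
  linear_combination (-(∏ x ∈ Finset.range ℓ, (w + x)) * (∏ x ∈ Finset.range m, (1 - w + x)) *
    (∏ x ∈ Finset.range ℓ, (1 - w + m + x)) * (∏ i ∈ Finset.range m, (w + ℓ + i)) * (-1)^m) * hsq

lemma ratio (w : ℂ) (ℓ m : ℕ)
    (h1 : (∏ i ∈ Finset.range (ℓ + m), (1 - w + i)) ≠ 0)
    (h2 : (∏ i ∈ Finset.range ℓ, (w - (ℓ + m : ℕ) + i)) ≠ 0)
    (h3 : (∏ i ∈ Finset.range m, (1 - w - (ℓ + m : ℕ) + i)) ≠ 0) :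
    (∏ i ∈ Finset.range ℓ, (w + i)) / (∏ i ∈ Finset.range ℓ, (w - (ℓ + m : ℕ) + i)) =
      (-1) ^ (ℓ + m) *
        ((∏ i ∈ Finset.range (ℓ + m), (w + i)) / (∏ i ∈ Finset.range (ℓ + m), (1 - w + i))) *
        ((∏ i ∈ Finset.range m, (1 - w + i)) / (∏ i ∈ Finset.range m, (1 - w - (ℓ + m : ℕ) + i))) := by
  have k := key w ℓ m
  push_cast at k h1 h2 h3 ⊢
  field_simp
  linear_combination k

/-- The monic skyburst polynomial
`S_n^ω(z) = Σ_{ℓ=0}^n binom(n,ℓ) · (−ω)_ℓ/(−n−ω)_ℓ · z^{n−ℓ}`,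
where `(a)_ℓ` is the Pochhammer (rising factorial) symbol. -/
noncomputable def skyburst (n : ℕ) (ω : ℝ) (z : ℂ) : ℂ :=
  ∑ ℓ ∈ Finset.range (n + 1),
    (n.choose ℓ : ℂ) *
      ((ascPochhammer ℂ ℓ).eval (-(ω : ℂ)) / (ascPochhammer ℂ ℓ).eval (-(n : ℂ) - (ω : ℂ))) *
      z ^ (n - ℓ)

theorem skyburst_negative_parameter (n : ℕ) (hn : 1 ≤ n) (ω : ℝ) (hω : 0 < ω)
    (hω' : ∀ k : ℕ, 1 ≤ k → k ≤ n → ω ≠ k) (z : ℂ) (hz : z ≠ 0) :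
    skyburst n (-ω) z =
      (-1 : ℂ) ^ n *
        ((ascPochhammer ℂ n).eval (ω : ℂ) / (ascPochhammer ℂ n).eval (1 - (ω : ℂ))) *
        z ^ n * skyburst n (ω - 1) (1 / z) := by
  have hne2 : ∀ k : ℕ, k ≤ n → (∏ i ∈ Finset.range k, (1 - (ω:ℂ) + i)) ≠ 0 := by
    intro k hk
    rw [Finset.prod_ne_zero_iff]
    intro i hi
    rw [Finset.mem_range] at hi
    have : (1 - (ω:ℂ) + i) = ((((i+1 : ℕ) : ℝ) - ω : ℝ) : ℂ) := by push_cast; ring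
    rw [this, Complex.ofReal_ne_zero, sub_ne_zero]
    have := hω' (i+1) (by omega) (by omega)
    exact fun h => this h.symm
  have hne3 : ∀ k : ℕ, k ≤ n → (∏ i ∈ Finset.range k, ((ω:ℂ) - n + i)) ≠ 0 := by
    intro k hk
    rw [Finset.prod_ne_zero_iff]
    intro i hi
    rw [Finset.mem_range] at hi
    have hin : i < n := lt_of_lt_of_le hi hk
    have : ((ω:ℂ) - n + i) = (((ω - ((n - i : ℕ) : ℝ)) : ℝ) : ℂ) := by
      have : ((n - i : ℕ) : ℝ) = (n : ℝ) - i := by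
        push_cast [Nat.cast_sub hin.le]; ring
      rw [this]; push_cast; ring
    rw [this, Complex.ofReal_ne_zero, sub_ne_zero]
    exact hω' (n - i) (by omega) (by omega)
  have hne4 : ∀ k : ℕ, k ≤ n → (∏ i ∈ Finset.range k, (1 - (ω:ℂ) - n + i)) ≠ 0 := by
    intro k hk
    rw [Finset.prod_ne_zero_iff]
    intro i hi
    rw [Finset.mem_range] at hi
    have hin : i < n := lt_of_lt_of_le hi hk
    have : (1 - (ω:ℂ) - n + i) = (((1 - ω - n + i) : ℝ) : ℂ) := by push_cast; ring
    rw [this, Complex.ofReal_ne_zero]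
    have h1 : (i : ℝ) + 1 ≤ n := by exact_mod_cast hin
    intro h
    have : (1 - ω - n + i : ℝ) < 0 := by linarith
    rw [h] at this; exact lt_irrefl _ this
  have hne1 : ∀ k : ℕ, (∏ i ∈ Finset.range k, ((ω:ℂ) + i)) ≠ 0 := by
    intro k
    rw [Finset.prod_ne_zero_iff]
    intro i _
    have : ((ω:ℂ) + i) = (((ω + i) : ℝ) : ℂ) := by push_cast; ring
    rw [this, Complex.ofReal_ne_zero]
    positivity
  unfold skyburst
  rw [Finset.mul_sum, ← Finset.sum_range_reflect]
  refine Finset.sum_congr rfl fun j hj => ?_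
  rw [Finset.mem_range] at hj
  obtain ⟨ℓ, hℓ⟩ : ∃ ℓ, n = ℓ + j := ⟨n - j, by omega⟩
  subst hℓ
  have e1 : ℓ + j + 1 - 1 - j = ℓ := by omega
  have e2 : ℓ + j - ℓ = j := by omega
  have e3 : ℓ + j - j = ℓ := by omega
  rw [e1, e2, e3]
  have E1 : (ascPochhammer ℂ ℓ).eval (-((-ω : ℝ) : ℂ)) = ∏ i ∈ Finset.range ℓ, ((ω:ℂ) + i) := by
    rw [asc_eval_prod]; exact Finset.prod_congr rfl fun i _ => by push_cast; ring
  have E2 : (ascPochhammer ℂ ℓ).eval (-((ℓ + j : ℕ) : ℂ) - ((-ω : ℝ) : ℂ)) =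
      ∏ i ∈ Finset.range ℓ, ((ω:ℂ) - ((ℓ + j : ℕ) : ℂ) + i) := by
    rw [asc_eval_prod]; exact Finset.prod_congr rfl fun i _ => by push_cast; ring
  have E3 : (ascPochhammer ℂ (ℓ + j)).eval ((ω : ℝ) : ℂ) =
      ∏ i ∈ Finset.range (ℓ + j), ((ω:ℂ) + i) := asc_eval_prod _ _
  have E4 : (ascPochhammer ℂ (ℓ + j)).eval (1 - ((ω : ℝ) : ℂ)) =
      ∏ i ∈ Finset.range (ℓ + j), (1 - (ω:ℂ) + i) := asc_eval_prod _ _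
  have E5 : (ascPochhammer ℂ j).eval (-((ω - 1 : ℝ) : ℂ)) =
      ∏ i ∈ Finset.range j, (1 - (ω:ℂ) + i) := by
    rw [asc_eval_prod]; exact Finset.prod_congr rfl fun i _ => by push_cast; ring
  have E6 : (ascPochhammer ℂ j).eval (-((ℓ + j : ℕ) : ℂ) - ((ω - 1 : ℝ) : ℂ)) =
      ∏ i ∈ Finset.range j, (1 - (ω:ℂ) - ((ℓ + j : ℕ) : ℂ) + i) := by
    rw [asc_eval_prod]; exact Finset.prod_congr rfl fun i _ => by push_cast; ring
  rw [E1, E2, E3, E4, E5, E6]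
  rw [ratio (ω:ℂ) ℓ j (hne2 _ le_rfl) (by exact_mod_cast hne3 ℓ (by omega)) (by exact_mod_cast hne4 j (by omega))]
  have hch : ((ℓ + j).choose ℓ : ℂ) = ((ℓ + j).choose j : ℂ) := by
    norm_cast
    rw [← Nat.choose_symm (by omega : j ≤ ℓ + j), e3]
  rw [hch]
  have hzz : z ^ (ℓ + j) * (1 / z) ^ ℓ = z ^ j := by
    rw [one_div, inv_pow, pow_add, mul_comm (z ^ ℓ), mul_assoc, mul_inv_cancel₀ (pow_ne_zero ℓ hz), mul_one]
  linear_combination (-((ℓ + j).choose j : ℂ) * (-1 : ℂ) ^ (ℓ + j) *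
    ((∏ i ∈ Finset.range (ℓ + j), ((ω:ℂ) + i)) / (∏ i ∈ Finset.range (ℓ + j), (1 - (ω:ℂ) + i))) *
    ((∏ i ∈ Finset.range j, (1 - (ω:ℂ) + i)) / (∏ i ∈ Finset.range j, (1 - (ω:ℂ) - ((ℓ + j : ℕ) : ℂ) + i)))) * hzz
end

section
/- Let ω > 0 be a real number and n ∈ ℕ. Then for every z ∈ ℂ, −z(1+z)·(d²/dz²)S_n^ω(z) + (1 − (2+ω−n)(z+1))·(d/dz)S_n^ω(z) + (1+ω)n·S_n^ω(z) = 0. -/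
open Finset Polynomial

noncomputable def skyA (n : ℕ) (ω : ℝ) (k : ℕ) : ℂ :=
  (n.choose k : ℂ) *
    ((ascPochhammer ℂ (n - k)).eval (-(ω : ℂ)) / (ascPochhammer ℂ (n - k)).eval (-(n : ℂ) - (ω : ℂ)))

lemma skyA_eq_zero (n : ℕ) (ω : ℝ) {k : ℕ} (h : n < k) : skyA n ω k = 0 := by
  simp [skyA, Nat.choose_eq_zero_of_lt h]

lemma poch_ne (n : ℕ) (ω : ℝ) (hω : 0 < ω) :
    ∀ ℓ, ℓ ≤ n → (ascPochhammer ℂ ℓ).eval (-(n : ℂ) - (ω : ℂ)) ≠ 0 := by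
  intro ℓ
  induction ℓ with
  | zero => simp
  | succ ℓ ih =>
    intro hle
    rw [ascPochhammer_succ_eval]
    refine mul_ne_zero (ih (by omega)) ?_
    have h1 : (-(n : ℂ) - (ω : ℂ) + (ℓ : ℂ)) = (((ℓ : ℝ) - n - ω : ℝ) : ℂ) := by push_cast; ring
    rw [h1, Complex.ofReal_ne_zero]
    have : (ℓ : ℝ) < n := by exact_mod_cast Nat.lt_of_succ_le hle
    intro h; nlinarith

lemma sky_key (n : ℕ) (ω : ℝ) (hω : 0 < ω) (k : ℕ) :
    ((k : ℂ) + 1) * ((k : ℂ) + 1 + ω - n) * skyA n ω (k + 1)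
      = ((n : ℂ) - k) * ((k : ℂ) + 1 + ω) * skyA n ω k := by
  rcases lt_trichotomy k n with hk | hk | hk
  · -- k < n
    obtain ⟨m, rfl⟩ : ∃ m, n = m + 1 + k := ⟨n - (k + 1), by omega⟩
    have e1 : m + 1 + k - (k + 1) = m := by omega
    have e2 : m + 1 + k - k = m + 1 := by omega
    have hq : (ascPochhammer ℂ m).eval (-((m + 1 + k : ℕ) : ℂ) - ω) ≠ 0 :=
      poch_ne (m + 1 + k) ω hω m (by omega)
    have hfac : (-((m + 1 + k : ℕ) : ℂ) - (ω : ℂ) + (m : ℂ)) ≠ 0 := by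
      have h1 : (-((m + 1 + k : ℕ) : ℂ) - (ω : ℂ) + (m : ℂ)) = ((-(1 : ℝ) - k - ω : ℝ) : ℂ) := by
        push_cast; ring
      rw [h1, Complex.ofReal_ne_zero]
      intro h; nlinarith [Nat.cast_nonneg (α := ℝ) k]
    have hchoose : ((m + 1 + k).choose (k + 1) : ℂ) * ((k : ℂ) + 1)
        = ((m + 1 + k).choose k : ℂ) * ((m : ℂ) + 1) := by
      have h := Nat.choose_succ_right_eq (m + 1 + k) k
      have h2 := congrArg (Nat.cast : ℕ → ℂ) h
      have e3 : m + 1 + k - k = m + 1 := by omega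
      rw [e3] at h2
      push_cast at h2
      linear_combination h2
    simp only [skyA, e1, e2, ascPochhammer_succ_eval]
    push_cast
    push_cast at hq
    generalize Polynomial.eval (-(ω:ℂ)) (ascPochhammer ℂ m) = p at *
    generalize hqd : Polynomial.eval (-((m:ℂ) + 1 + (k:ℂ)) - (ω:ℂ)) (ascPochhammer ℂ m) = q at *
    have hω1 : ((k : ℂ) + 1 + ω) ≠ 0 := by
      have h1 : ((k : ℂ) + 1 + ω) = (((k : ℝ) + 1 + ω : ℝ) : ℂ) := by push_cast; ring
      rw [h1, Complex.ofReal_ne_zero]; positivity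
    rw [show (-((m:ℂ) + 1 + (k:ℂ)) - (ω:ℂ) + (m:ℂ)) = -((k:ℂ) + 1 + (ω:ℂ)) from by ring]
    rw [mul_neg, div_neg]
    field_simp [hq, hω1]
    linear_combination ((ω:ℂ) - (m:ℂ)) * p * hchoose
  · rw [hk, skyA_eq_zero n ω (by omega)]
    ring_nf
  · rw [skyA_eq_zero n ω hk, skyA_eq_zero n ω (by omega)]
    ring

noncomputable def skyP (n : ℕ) (ω : ℝ) : Polynomial ℂ :=
  ∑ k ∈ Finset.range (n + 1), monomial k (skyA n ω k)

lemma skyP_coeff (n : ℕ) (ω : ℝ) (m : ℕ) : (skyP n ω).coeff m = skyA n ω m := by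
  rw [skyP, finset_sum_coeff]
  simp only [coeff_monomial]
  rw [Finset.sum_ite_eq' (Finset.range (n + 1)) m (fun k => skyA n ω k)]
  split_ifs with h
  · rfl
  · rw [skyA_eq_zero n ω (by simpa using h)]

lemma skyP_eval (n : ℕ) (ω : ℝ) (z : ℂ) : (skyP n ω).eval z = skyburst n ω z := by
  rw [skyP, eval_finset_sum, skyburst]
  simp only [eval_monomial]
  rw [← Finset.sum_range_reflect (fun k => skyA n ω k * z ^ k) (n + 1)]
  refine Finset.sum_congr rfl fun ℓ hℓ => ?_
  have hℓn : ℓ ≤ n := by simpa [Nat.lt_succ_iff] using hℓ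
  have h1 : n + 1 - 1 - ℓ = n - ℓ := by omega
  have h2 : n - (n - ℓ) = ℓ := by omega
  rw [h1, skyA, h2, Nat.choose_symm hℓn]

lemma skyQ_zero (n : ℕ) (ω : ℝ) (hω : 0 < ω) :
    (Polynomial.C ((n : ℂ) - 1 - ω)) * derivative (skyP n ω)
      + (Polynomial.C (-(2 + (ω : ℂ) - n))) * (derivative (skyP n ω) * X)
      + (Polynomial.C ((1 + (ω : ℂ)) * n)) * skyP n ω
      - derivative (derivative (skyP n ω)) * X
      - derivative (derivative (skyP n ω)) * X ^ 2 = 0 := by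
  ext m
  simp only [coeff_sub, coeff_add, coeff_C_mul, coeff_zero]
  rcases m with _ | _ | k
  · simp only [mul_coeff_zero, coeff_X_zero, mul_zero, coeff_mul_X_pow', coeff_X_pow,
      Nat.not_succ_le_zero, if_neg, Nat.le_zero, coeff_derivative, skyP_coeff]
    norm_num
    have hkey := sky_key n ω hω 0
    push_cast at hkey ⊢
    linear_combination -hkey
  · simp only [coeff_mul_X, coeff_mul_X_pow', coeff_derivative, skyP_coeff, coeff_X_pow]
    norm_num
    have hkey := sky_key n ω hω 1
    push_cast at hkey ⊢
    linear_combination -hkey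
  · simp only [coeff_mul_X, coeff_mul_X_pow', coeff_derivative, skyP_coeff,
      if_pos (by omega : 2 ≤ k + 2)]
    have h2 : k + 2 - 2 = k := by omega
    rw [h2]
    have hkey := sky_key n ω hω (k + 2)
    push_cast at hkey ⊢
    linear_combination -hkey

theorem skyburst_ODE (ω : ℝ) (hω : 0 < ω) (n : ℕ) (z : ℂ) :
    -z * (1 + z) * iteratedDeriv 2 (skyburst n ω) z +
        (1 - (2 + (ω : ℂ) - (n : ℂ)) * (z + 1)) * deriv (skyburst n ω) z +
        (1 + (ω : ℂ)) * (n : ℂ) * skyburst n ω z = 0 := by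
  have hP : skyburst n ω = fun z => (skyP n ω).eval z :=
    funext fun z => (skyP_eval n ω z).symm
  have hd1 : deriv (skyburst n ω) = fun z => (derivative (skyP n ω)).eval z := by
    rw [hP]; exact funext fun x => Polynomial.deriv _
  have hd2 : iteratedDeriv 2 (skyburst n ω)
      = fun z => (derivative (derivative (skyP n ω))).eval z := by
    rw [iteratedDeriv_succ, iteratedDeriv_one, hd1]
    exact funext fun x => Polynomial.deriv _
  have h0 := congrArg (Polynomial.eval z) (skyQ_zero n ω hω)
  simp only [eval_sub, eval_add, eval_mul, eval_C, eval_X, eval_pow, eval_zero] at h0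
  rw [hd1, hd2, hP]
  linear_combination h0
end
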